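/- Let R₁(x) = (π² + x²)³/x² and L(m) = ((m+1)m)^{1/3}·((m+1)^{2/3}+m^{2/3})^{1/2} for integers m ≥ 0 (with L(0) = 0). For any L > 0 with L(m−1) < L ≤ L(m), the minimizer of R₁ over the set {jπ/L : j ∈ ℤ, j ≥ 1} is attained at j = m; consequently the minimizing wave number α = mπ/L satisfies α ≥ π/(2^{1/3}·(2^{2/3}+1)^{1/2}). -/

import Mathlib

open Real

noncomputable def Lcrit (m : ℕ) : ℝ :=
  (((m:ℝ)+1)*(m:ℝ))^((1:ℝ)/3) * (((m:ℝ)+1)^((2:ℝ)/3) + (m:ℝ)^((2:ℝ)/3))^((1:ℝ)/2)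

lemma cube_23 (x : ℝ) (hx : 0 ≤ x) : (x^((2:ℝ)/3))^3 = x^2 := by
  rw [← Real.rpow_natCast (x^((2:ℝ)/3)) 3, ← Real.rpow_mul hx, ← Real.rpow_natCast x 2]
  norm_num

lemma sq_13 (x : ℝ) (hx : 0 ≤ x) : (x^((1:ℝ)/3))^2 = x^((2:ℝ)/3) := by
  rw [← Real.rpow_natCast (x^((1:ℝ)/3)) 2, ← Real.rpow_mul hx]
  norm_num

lemma sq_12 (x : ℝ) (hx : 0 ≤ x) : (x^((1:ℝ)/2))^2 = x := by
  rw [← Real.rpow_natCast (x^((1:ℝ)/2)) 2, ← Real.rpow_mul hx]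
  norm_num

lemma keyA (a b c : ℝ) (ha : 0 ≤ a) (hb : 0 ≤ b) (hc : 0 ≤ c) (h : c ≤ a*b*(a+b)) :
    c^3 ≤ a^3*b^3*(3*c+a^3+b^3) := by
  have h4 : 4*(a^3*b^3) ≤ (a*b*(a+b))^2 := by nlinarith [sq_nonneg (a*b*(a-b))]
  have prod : 0 ≤ (a*b*(a+b) - c) * (c^2 + c*(a*b*(a+b)) + (a*b*(a+b))^2 - 3*(a^3*b^3)) := by
    apply mul_nonneg (by linarith)
    have : 0 ≤ c*(a*b*(a+b)) := mul_nonneg hc (by positivity)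
    nlinarith [sq_nonneg c]
  nlinarith [prod]

lemma keyB (a b c : ℝ) (ha : 0 ≤ a) (hb : 0 ≤ b) (h : a*b*(a+b) ≤ c) :
    a^3*b^3*(3*c+a^3+b^3) ≤ c^3 := by
  have hc : 0 ≤ c := le_trans (by positivity) h
  have h4 : 4*(a^3*b^3) ≤ (a*b*(a+b))^2 := by nlinarith [sq_nonneg (a*b*(a-b))]
  have prod : 0 ≤ (c - a*b*(a+b)) * (c^2 + c*(a*b*(a+b)) + (a*b*(a+b))^2 - 3*(a^3*b^3)) := by
    apply mul_nonneg (by linarith)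
    have : 0 ≤ c*(a*b*(a+b)) := mul_nonneg hc (by positivity)
    nlinarith [sq_nonneg c]
  nlinarith [prod]

lemma sq_Lcrit (m : ℕ) :
    (Lcrit m)^2 = ((m:ℝ)+1)^((2:ℝ)/3) * (m:ℝ)^((2:ℝ)/3)
      * ((((m:ℝ)+1)^((2:ℝ)/3)) + ((m:ℝ)^((2:ℝ)/3))) := by
  have hm : (0:ℝ) ≤ (m:ℝ) := by positivity
  have hab : (0:ℝ) ≤ ((m:ℝ)+1)^((2:ℝ)/3) + (m:ℝ)^((2:ℝ)/3) := by positivity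
  rw [Lcrit, mul_pow, sq_13 _ (by positivity), sq_12 _ hab,
    Real.mul_rpow (by positivity) hm]

lemma Lcrit_nonneg (m : ℕ) : 0 ≤ Lcrit m := by
  unfold Lcrit; positivity

set_option maxHeartbeats 1000000 in
theorem stmt_3 (m : ℕ) (hm : 1 ≤ m) (L : ℝ) (hL : 0 < L)
    (h1 : Lcrit (m-1) < L) (h2 : L ≤ Lcrit m) :
    (∀ j : ℕ, 1 ≤ j →
      (π^2 + ((m:ℝ)*π/L)^2)^3 / ((m:ℝ)*π/L)^2
        ≤ (π^2 + ((j:ℝ)*π/L)^2)^3 / ((j:ℝ)*π/L)^2) ∧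
    (m:ℝ)*π/L ≥ π / ((2:ℝ)^((1:ℝ)/3) * ((2:ℝ)^((2:ℝ)/3) + 1)^((1:ℝ)/2)) := by
  have hπ : (0:ℝ) < π := Real.pi_pos
  have hmR : (1:ℝ) ≤ (m:ℝ) := by exact_mod_cast hm
  have hm0 : (0:ℝ) < (m:ℝ) := by linarith
  set a : ℝ := (m:ℝ)^((2:ℝ)/3) with hadef
  set b : ℝ := ((m:ℝ)+1)^((2:ℝ)/3) with hbdef
  have ha0 : 0 ≤ a := by positivity
  have hb0 : 0 ≤ b := by positivity
  have ha3 : a^3 = (m:ℝ)^2 := cube_23 _ (by positivity)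
  have hb3 : b^3 = ((m:ℝ)+1)^2 := cube_23 _ (by positivity)
  have hc0 : (0:ℝ) ≤ L^2 := sq_nonneg L
  -- upper bound on L^2
  have hcub : L^2 ≤ b*a*(b+a) := by
    have h := pow_le_pow_left₀ hL.le h2 2
    rwa [sq_Lcrit] at h
  -- the key comparison
  have KEY : ∀ j : ℕ, 1 ≤ j →
      (L^2+(m:ℝ)^2)^3 * (j:ℝ)^2 ≤ (L^2+(j:ℝ)^2)^3 * (m:ℝ)^2 := by
    intro j hj
    have hjR : (1:ℝ) ≤ (j:ℝ) := by exact_mod_cast hj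
    rcases lt_trichotomy j m with hlt | heq | hgt
    · -- j < m, so m ≥ 2
      have hm2 : 2 ≤ m := lt_of_le_of_lt hj hlt
      have hjm : (j:ℝ) ≤ (m:ℝ)-1 := by
        have : (j:ℝ)+1 ≤ (m:ℝ) := by exact_mod_cast hlt
        linarith
      set a' : ℝ := ((m:ℝ)-1)^((2:ℝ)/3) with ha'def
      have ha'0 : 0 ≤ a' := Real.rpow_nonneg (by linarith) _
      have ha'3 : a'^3 = ((m:ℝ)-1)^2 := cube_23 _ (by linarith)
      have hcast : ((m-1 : ℕ) : ℝ) = (m:ℝ)-1 := by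
        push_cast [Nat.cast_sub hm]; ring
      have hlow : a * a' * (a + a') ≤ L^2 := by
        have h := pow_le_pow_left₀ (Lcrit_nonneg (m-1)) h1.le 2
        rw [sq_Lcrit (m-1), hcast] at h
        have : (m:ℝ)-1+1 = (m:ℝ) := by ring
        rw [this] at h
        exact h
      have hkey := keyB a a' (L^2) ha0 ha'0 hlow
      rw [ha3, ha'3] at hkey
      -- monotone step: j^2 ≤ (m-1)^2
      have hw : (j:ℝ)^2 ≤ ((m:ℝ)-1)^2 := by nlinarith
      have hh : (0:ℝ) ≤ (m:ℝ)^2 * (((m:ℝ)-1)^2 - (j:ℝ)^2)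
          * (3*L^2+(m:ℝ)^2+((m:ℝ)-1)^2+(j:ℝ)^2) :=
        mul_nonneg (mul_nonneg (sq_nonneg _) (sub_nonneg.2 hw)) (by positivity)
      have hmono : (m:ℝ)^2*(j:ℝ)^2*(3*L^2+(m:ℝ)^2+(j:ℝ)^2)
          ≤ (m:ℝ)^2*((m:ℝ)-1)^2*(3*L^2+(m:ℝ)^2+((m:ℝ)-1)^2) := by
        nlinarith [hh]
      have hfin : (m:ℝ)^2*(j:ℝ)^2*(3*L^2+(m:ℝ)^2+(j:ℝ)^2) ≤ (L^2)^3 := by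
        nlinarith [hkey, hmono]
      
      nlinarith [mul_nonneg (sub_nonneg.2 (by nlinarith : (j:ℝ)^2 ≤ (m:ℝ)^2))
        (sub_nonneg.2 hfin)]
    · subst heq; exact le_refl _
    · -- m < j
      have hjm : (m:ℝ)+1 ≤ (j:ℝ) := by exact_mod_cast hgt
      have hkey := keyA b a (L^2) hb0 ha0 hc0 hcub
      rw [ha3, hb3] at hkey
      have hw : ((m:ℝ)+1)^2 ≤ (j:ℝ)^2 := by nlinarith
      have hmono : ((m:ℝ)+1)^2*(m:ℝ)^2*(3*L^2+((m:ℝ)+1)^2+(m:ℝ)^2)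
          ≤ (j:ℝ)^2*(m:ℝ)^2*(3*L^2+(j:ℝ)^2+(m:ℝ)^2) := by
        have hh : (0:ℝ) ≤ (m:ℝ)^2 * ((j:ℝ)^2 - ((m:ℝ)+1)^2)
            * (3*L^2+(m:ℝ)^2+((m:ℝ)+1)^2+(j:ℝ)^2) :=
          mul_nonneg (mul_nonneg (sq_nonneg _) (sub_nonneg.2 hw)) (by positivity)
        nlinarith [hh]
      have hfin : (L^2)^3 ≤ (j:ℝ)^2*(m:ℝ)^2*(3*L^2+(j:ℝ)^2+(m:ℝ)^2) := by
        nlinarith [hkey, hmono]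
      nlinarith [mul_nonneg (sub_nonneg.2 (by nlinarith : (m:ℝ)^2 ≤ (j:ℝ)^2))
        (sub_nonneg.2 hfin)]
  constructor
  · intro j hj
    have hjR : (1:ℝ) ≤ (j:ℝ) := by exact_mod_cast hj
    have hj0 : (0:ℝ) < (j:ℝ) := by linarith
    have hX : (0:ℝ) < ((m:ℝ)*π/L)^2 := by positivity
    have hY : (0:ℝ) < ((j:ℝ)*π/L)^2 := by positivity
    rw [div_le_div_iff₀ hX hY]
    have e1 : (π^2+((m:ℝ)*π/L)^2)^3 * ((j:ℝ)*π/L)^2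
        = (π^8/L^8) * ((L^2+(m:ℝ)^2)^3 * (j:ℝ)^2) := by
      field_simp
    have e2 : (π^2+((j:ℝ)*π/L)^2)^3 * ((m:ℝ)*π/L)^2
        = (π^8/L^8) * ((L^2+(j:ℝ)^2)^3 * (m:ℝ)^2) := by
      field_simp
    rw [e1, e2]
    exact mul_le_mul_of_nonneg_left (KEY j hj) (by positivity)
  · have hL1 : Lcrit 1 = (2:ℝ)^((1:ℝ)/3) * ((2:ℝ)^((2:ℝ)/3) + 1)^((1:ℝ)/2) := by
      unfold Lcrit; norm_num
    have hLc1pos : 0 < Lcrit 1 := by rw [hL1]; positivity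
    have hsq1 : (Lcrit 1)^2 = (2:ℝ)^((2:ℝ)/3) * ((2:ℝ)^((2:ℝ)/3)+1) := by
      rw [sq_Lcrit]; norm_num
    have hb2a : b ≤ (2:ℝ)^((2:ℝ)/3) * a := by
      rw [hbdef, hadef, ← Real.mul_rpow (by norm_num) (by positivity)]
      exact Real.rpow_le_rpow (by positivity) (by linarith) (by norm_num)
    have ht0 : (0:ℝ) ≤ (2:ℝ)^((2:ℝ)/3) := by positivity
    have hsq : (Lcrit m)^2 ≤ ((m:ℝ)*Lcrit 1)^2 := by
      rw [sq_Lcrit m, mul_pow, hsq1]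
      have hba : b*a*(b+a) ≤ (2:ℝ)^((2:ℝ)/3)*((2:ℝ)^((2:ℝ)/3)+1) * a^3 := by
        nlinarith [mul_nonneg ha0 (mul_nonneg ha0 (sub_nonneg.2 hb2a)),
          mul_nonneg ha0 (mul_nonneg (sub_nonneg.2 hb2a) (by linarith : 0 ≤ b + (2:ℝ)^((2:ℝ)/3)*a))]
      rw [ha3] at hba
      nlinarith [hba]
    have hmm : Lcrit m ≤ (m:ℝ)*Lcrit 1 := by
      have h0' : 0 ≤ (m:ℝ)*Lcrit 1 := by positivity
      exact (pow_le_pow_iff_left₀ (Lcrit_nonneg m) h0' two_ne_zero).1 hsq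
    have hLle : L ≤ (m:ℝ)*Lcrit 1 := le_trans h2 hmm
    rw [ge_iff_le, ← hL1, div_le_div_iff₀ hLc1pos hL]
    nlinarith [mul_le_mul_of_nonneg_left hLle hπ.le]
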